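/- Set a̲ := Φ^{−1} log( (α⁻ − q C_U)/(α⁻ + α⁺) ) < 0 and, for b ≥ 0, define Γ(a̲, b) := C_U + C_D + (q C_U − α⁻) W̄(b − a̲) + (α⁻ + α⁺) W̄(b). If additionally x ↦ e^{−Φx} W(x) is nondecreasing on [0, ∞), then b ↦ Γ(a̲, b) is nonincreasing on [0, ∞) and lim_{b→∞} Γ(a̲, b) = C_D − α⁺/q. Consequently Γ(a̲, b) < 0 for some b ≥ 0 if and only if C_D < α⁺/q (Case 1 of the paper), while Γ(a̲, b) ≥ 0 for all b ≥ 0 if and only if C_D ≥ α⁺/q (Case 2 of the paper). -/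

import Mathlib

open MeasureTheory Filter Set

/-- Linear running cost: `b ↦ Γ(a̲, b)` is nonincreasing on `[0, ∞)` with limit
`C_D - α⁺/q`; hence `Γ(a̲, ·)` goes below `0` iff `C_D < α⁺/q` (Case 1) and stays
nonnegative iff `C_D ≥ α⁺/q` (Case 2). -/
theorem stmt18
    (Φ q κ αm αp CU CD : ℝ)
    (hΦ : 0 < Φ) (hq : 0 < q) (hκ : 0 < κ) (hαm : 0 < αm) (hαp : 0 < αp)
    (h₁ : 0 < q * CU + αp) (h₂ : q * CU - αm < 0)
    (hC : 0 < CU + CD)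
    -- the scale-function decomposition `W(y) = κ e^{Φy} - û(y)`
    (uhat : ℝ → ℝ)
    (h_int : IntegrableOn uhat (Set.Ici 0))
    (h_val : ∫ y in Set.Ici 0, uhat y = 1 / q - κ / Φ)
    (W : ℝ → ℝ)
    (hW : ∀ y, 0 ≤ y → W y = κ * Real.exp (Φ * y) - uhat y)
    (hW_neg : ∀ y, y < 0 → W y = 0)
    (hW_exp : MonotoneOn (fun x => Real.exp (-(Φ * x)) * W x) (Set.Ici 0))
    (aund : ℝ) (haund : aund = Φ⁻¹ * Real.log ((αm - q * CU) / (αm + αp)))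
    -- `Γ(a̲, ·)` for the linear running cost, written via `W̄(x) = ∫_0^x W(y) dy`
    (Γ : ℝ → ℝ)
    (hΓ : ∀ b : ℝ, Γ b = CU + CD + (q * CU - αm) * (∫ y in (0:ℝ)..(b - aund), W y) +
        (αm + αp) * ∫ y in (0:ℝ)..b, W y) :
    aund < 0 ∧
    AntitoneOn Γ (Set.Ici 0) ∧
    Tendsto Γ atTop (nhds (CD - αp / q)) ∧
    ((∃ b : ℝ, 0 ≤ b ∧ Γ b < 0) ↔ CD < αp / q) ∧
    ((∀ b : ℝ, 0 ≤ b → 0 ≤ Γ b) ↔ αp / q ≤ CD) := by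
  have hΦ0 : Φ ≠ 0 := ne_of_gt hΦ
  have hnum : 0 < αm - q * CU := by linarith
  have hden : 0 < αm + αp := by linarith
  have hratio0 : 0 < (αm - q * CU) / (αm + αp) := div_pos hnum hden
  have hratio1 : (αm - q * CU) / (αm + αp) < 1 := by
    rw [div_lt_one hden]; linarith
  have ha : aund < 0 := by
    rw [haund]
    exact mul_neg_of_pos_of_neg (inv_pos.mpr hΦ) (Real.log_neg hratio0 hratio1)
  have he : Real.exp (Φ * aund) = (αm - q * CU) / (αm + αp) := by
    rw [haund, ← mul_assoc, mul_inv_cancel₀ hΦ0, one_mul, Real.exp_log hratio0]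
  have hkey : αm - q * CU = (αm + αp) * Real.exp (Φ * aund) := by
    rw [he]; field_simp
  -- indicator representation and integrability
  set g : ℝ → ℝ := fun y => κ * Real.exp (Φ * y) - uhat y with hg
  have hWind : W = Set.indicator (Set.Ici 0) g := by
    funext y
    by_cases hy : (0:ℝ) ≤ y
    · simp only [Set.indicator_apply, Set.mem_Ici, if_pos hy]; exact hW y hy
    · simp only [Set.indicator_apply, Set.mem_Ici, if_neg hy]; exact hW_neg y (lt_of_not_ge hy)
  have hexpint : ∀ c d : ℝ, IntervalIntegrable (fun y => κ * Real.exp (Φ * y)) volume c d :=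
    fun c d => ((continuous_const.mul (Real.continuous_exp.comp (continuous_const.mul continuous_id))).intervalIntegrable c d)
  have hint : ∀ c d : ℝ, IntervalIntegrable W volume c d := by
    intro c d
    rw [intervalIntegrable_iff, hWind, IntegrableOn,
      integrable_indicator_iff measurableSet_Ici, IntegrableOn,
      Measure.restrict_restrict measurableSet_Ici]
    apply Integrable.sub
    · exact (((hexpint c d).def').mono_set Set.inter_subset_right)
    · exact h_int.mono_set Set.inter_subset_left
  -- formula for the partial integrals of W
  have hWbar : ∀ b : ℝ, 0 ≤ b → ∫ y in (0:ℝ)..b, W y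
      = κ / Φ * (Real.exp (Φ * b) - 1) - ∫ y in (0:ℝ)..b, uhat y := by
    intro b hb
    have huI : IntervalIntegrable uhat volume 0 b := by
      rw [intervalIntegrable_iff]
      apply h_int.mono_set
      rw [Set.uIoc_of_le hb]
      exact fun y hy => le_of_lt hy.1
    have hcg : ∫ y in (0:ℝ)..b, W y = ∫ y in (0:ℝ)..b, g y := by
      apply intervalIntegral.integral_congr
      intro y hy
      rw [Set.uIcc_of_le hb] at hy
      exact hW y hy.1
    rw [hcg]
    have : ∫ y in (0:ℝ)..b, g y
        = (∫ y in (0:ℝ)..b, κ * Real.exp (Φ * y)) - ∫ y in (0:ℝ)..b, uhat y :=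
      intervalIntegral.integral_sub (hexpint 0 b) huI
    rw [this]
    congr 1
    rw [intervalIntegral.integral_const_mul]
    rw [intervalIntegral.integral_comp_mul_left (fun y => Real.exp y) hΦ0]
    simp [integral_exp]
    field_simp
  -- Γ formula in terms of uhat integrals
  set I : ℝ := 1 / q - κ / Φ with hI
  set C0 : ℝ := CU + CD - κ * (q * CU + αp) / Φ with hC0
  have hA0 : Real.exp (Φ * aund) ≠ 0 := Real.exp_ne_zero _
  have hΓform : ∀ b : ℝ, 0 ≤ b → Γ b
      = C0 - (q * CU - αm) * (∫ y in (0:ℝ)..(b - aund), uhat y)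
          - (αm + αp) * ∫ y in (0:ℝ)..b, uhat y := by
    intro b hb
    have hba : (0:ℝ) ≤ b - aund := by linarith
    rw [hΓ b, hWbar _ hba, hWbar b hb, hC0]
    have hsplit : Real.exp (Φ * (b - aund)) = Real.exp (Φ * b) * (αm + αp) / (αm - q * CU) := by
      rw [show Φ * (b - aund) = Φ * b - Φ * aund by ring, Real.exp_sub, he]
      field_simp
    rw [hsplit]
    field_simp
    have hX : (q * CU - αm) * (αm - q * CU)⁻¹ = -1 := by
      rw [show q * CU - αm = -(αm - q * CU) by ring, neg_mul, mul_inv_cancel₀ hnum.ne']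
    linear_combination (κ * Real.exp (Φ * b) * (αm + αp)) * hX
  -- limit
  have hU : Tendsto (fun b : ℝ => ∫ y in (0:ℝ)..b, uhat y) atTop (nhds I) := by
    have h1 : IntegrableOn uhat (Set.Ioi 0) := h_int.mono_set Set.Ioi_subset_Ici_self
    have := MeasureTheory.intervalIntegral_tendsto_integral_Ioi 0 h1 (tendsto_id (α := ℝ))
    rwa [← MeasureTheory.integral_Ici_eq_integral_Ioi, h_val] at this
  have hshift : Tendsto (fun b : ℝ => b - aund) atTop atTop :=
    tendsto_atTop_add_const_right atTop (-aund) tendsto_id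
  have hU2 : Tendsto (fun b : ℝ => ∫ y in (0:ℝ)..(b - aund), uhat y) atTop (nhds I) :=
    hU.comp hshift
  have hLeq : C0 - (q * CU - αm) * I - (αm + αp) * I = CD - αp / q := by
    rw [hC0, hI]; field_simp; ring
  have hT : Tendsto Γ atTop (nhds (CD - αp / q)) := by
    have h1 : Tendsto (fun b : ℝ => C0 - (q * CU - αm) * (∫ y in (0:ℝ)..(b - aund), uhat y)
        - (αm + αp) * ∫ y in (0:ℝ)..b, uhat y) atTop
        (nhds (C0 - (q * CU - αm) * I - (αm + αp) * I)) :=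
      (tendsto_const_nhds.sub (hU2.const_mul _)).sub (hU.const_mul _)
    rw [hLeq] at h1
    apply h1.congr'
    filter_upwards [eventually_ge_atTop (0:ℝ)] with b hb
    exact (hΓform b hb).symm
  -- antitone
  have hanti : AntitoneOn Γ (Set.Ici 0) := by
    intro x hx y hy hxy
    have hx0 : (0:ℝ) ≤ x := hx
    have hWs : IntervalIntegrable (fun t => W (t - aund)) volume x y := by
      have := (hint (x - aund) (y - aund)).comp_sub_right aund
      simpa using this
    have e1 : (∫ t in (0:ℝ)..(y - aund), W t) - ∫ t in (0:ℝ)..(x - aund), W t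
        = ∫ t in (x - aund)..(y - aund), W t :=
      intervalIntegral.integral_interval_sub_left (hint 0 (y - aund)) (hint 0 (x - aund))
    have e2 : (∫ t in (0:ℝ)..y, W t) - ∫ t in (0:ℝ)..x, W t = ∫ t in x..y, W t :=
      intervalIntegral.integral_interval_sub_left (hint 0 y) (hint 0 x)
    have e3 : ∫ t in (x - aund)..(y - aund), W t = ∫ t in x..y, W (t - aund) :=
      (intervalIntegral.integral_comp_sub_right W aund).symm
    have hdiff : Γ y - Γ x
        = ∫ t in x..y, ((q * CU - αm) * W (t - aund) + (αm + αp) * W t) := by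
      rw [intervalIntegral.integral_add (hWs.const_mul _) ((hint x y).const_mul _),
        intervalIntegral.integral_const_mul, intervalIntegral.integral_const_mul,
        ← e3, ← e1, ← e2, hΓ x, hΓ y]
      ring
    have hptw : ∀ t ∈ Set.Icc x y,
        (q * CU - αm) * W (t - aund) + (αm + αp) * W t ≤ 0 := by
      intro t ht
      have ht0 : (0:ℝ) ≤ t := le_trans hx0 ht.1
      have hta : (0:ℝ) ≤ t - aund := by linarith
      have hm := hW_exp (Set.mem_Ici.mpr ht0) (Set.mem_Ici.mpr hta) (by linarith)
      simp only at hm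
      have hp : (0:ℝ) < Real.exp (Φ * t) := Real.exp_pos _
      have h5 : W t ≤ Real.exp (Φ * aund) * W (t - aund) := by
        have h6 := mul_le_mul_of_nonneg_left hm hp.le
        rw [← mul_assoc, ← mul_assoc, ← Real.exp_add, ← Real.exp_add] at h6
        rw [show Φ * t + -(Φ * t) = 0 by ring, Real.exp_zero, one_mul,
          show Φ * t + -(Φ * (t - aund)) = Φ * aund by ring] at h6
        exact h6
      have h7 : (αm + αp) * W t ≤ (αm - q * CU) * W (t - aund) := by
        calc (αm + αp) * W t ≤ (αm + αp) * (Real.exp (Φ * aund) * W (t - aund)) :=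
              mul_le_mul_of_nonneg_left h5 hden.le
          _ = (αm - q * CU) * W (t - aund) := by rw [hkey]; ring
      linarith
    have hle : ∫ t in x..y, ((q * CU - αm) * W (t - aund) + (αm + αp) * W t) ≤ 0 := by
      have := intervalIntegral.integral_nonneg (μ := volume) (f := fun t =>
        -((q * CU - αm) * W (t - aund) + (αm + αp) * W t)) hxy
        (fun u hu => by simpa using neg_nonneg.mpr (hptw u hu))
      rw [intervalIntegral.integral_neg] at this
      linarith
    linarith [hdiff ▸ hle, (by linarith [hdiff, hle] : Γ y ≤ Γ x)]
  -- lower bound Γ b ≥ limit on [0,∞)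
  have hge : ∀ b : ℝ, 0 ≤ b → CD - αp / q ≤ Γ b := by
    intro b hb
    apply le_of_tendsto hT
    filter_upwards [eventually_ge_atTop b] with c hc
    exact hanti (Set.mem_Ici.mpr hb) (Set.mem_Ici.mpr (le_trans hb hc)) hc
  refine ⟨ha, hanti, hT, ?_, ?_⟩
  · constructor
    · rintro ⟨b, hb, hΓb⟩
      by_contra hcon
      push_neg at hcon
      have := hge b hb
      have : (0:ℝ) ≤ Γ b := by
        have : (0:ℝ) ≤ CD - αp / q := by linarith
        linarith [hge b hb]
      linarith
    · intro hlt
      have hL : CD - αp / q < 0 := by linarith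
      have := (hT.eventually (eventually_lt_nhds hL)).and (eventually_ge_atTop (0:ℝ))
      obtain ⟨b, hb1, hb2⟩ := this.exists
      exact ⟨b, hb2, hb1⟩
  · constructor
    · intro hall
      by_contra hcon
      push_neg at hcon
      have hL : CD - αp / q < 0 := by linarith
      have := (hT.eventually (eventually_lt_nhds hL)).and (eventually_ge_atTop (0:ℝ))
      obtain ⟨b, hb1, hb2⟩ := this.exists
      linarith [hall b hb2]
    · intro hge' b hb
      have := hge b hb
      linarith
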